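/- Let A be an idempotent algebra and R ≤ A² a subalgebra viewed as a binary relation. If R locally n-absorbs the equality relation on A and R contains a directed walk of length n−1, then R contains directed walks between appropriate endpoints of every length ≥ n−1; in particular, if R furthermore contains a directed closed walk, then R contains directed closed walks of every sufficiently large length. -/

import Mathlib

/-- If `R` locally `n`-absorbs equality (via idempotent operations preserving `R`) and
contains a directed walk of length `n-1`, then directed walks from its starting point
exist in every length `≥ n-1`; if moreover `R` has a directed closed walk, it has
directed closed walks of every sufficiently large length. -/
theorem stmt_8 {A : Type*} (n : ℕ) (hn : 2 ≤ n) (R : Set (A × A))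
    (habs : ∀ C : Set (Fin n → A × A), C.Finite →
      (∀ c ∈ C, ∃ i : Fin n, (c i).1 = (c i).2 ∧ ∀ j : Fin n, j ≠ i → c j ∈ R) →
      ∃ t : (Fin n → A) → A,
        (∀ a : A, t (fun _ => a) = a) ∧
        (∀ ab : Fin n → A × A, (∀ i, ab i ∈ R) →
          (t (fun i => (ab i).1), t (fun i => (ab i).2)) ∈ R) ∧
        (∀ c ∈ C, (t (fun i => (c i).1), t (fun i => (c i).2)) ∈ R))
    (a : ℕ → A)
    (hwa : ∀ i : ℕ, i + 1 < n → (a i, a (i + 1)) ∈ R) :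
    (∀ m : ℕ, n - 1 ≤ m →
      ∃ w : ℕ → A, w 0 = a 0 ∧ ∀ i < m, (w i, w (i + 1)) ∈ R) ∧
    ((∃ (c : ℕ → A) (p : ℕ), 1 ≤ p ∧ c p = c 0 ∧ ∀ i < p, (c i, c (i + 1)) ∈ R) →
      ∃ M : ℕ, ∀ m ≥ M, ∃ w : ℕ → A, w m = w 0 ∧ ∀ i < m, (w i, w (i + 1)) ∈ R) := by
  classical
  -- Key stretching lemma: any walk of length `m ≥ n-1` can be stretched to a walk of
  -- length `m+1` with the same endpoints.
  have hstretch : ∀ m : ℕ, n - 1 ≤ m → ∀ w : ℕ → A,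
      (∀ i < m, (w i, w (i + 1)) ∈ R) →
      ∃ w' : ℕ → A, w' 0 = w 0 ∧ w' (m + 1) = w m ∧
        ∀ i < m + 1, (w' i, w' (i + 1)) ∈ R := by
    intro m hm w hw
    set base := m - (n - 1) with hbase
    have hbm : base + (n - 1) = m := by omega
    set v : ℕ → Fin n → A := fun k i => w (base + k - if (i : ℕ) < k then 1 else 0)
      with hv
    set cf : Fin n → Fin n → A × A := fun k i => (v ((k : ℕ)) i, v ((k : ℕ) + 1) i)
      with hcf
    have hcond : ∀ c ∈ Set.range cf, ∃ i : Fin n,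
        (c i).1 = (c i).2 ∧ ∀ j : Fin n, j ≠ i → c j ∈ R := by
      rintro c ⟨k, rfl⟩
      refine ⟨k, ?_, ?_⟩
      · show (v ((k : ℕ)) k, v ((k : ℕ) + 1) k).1 = (v ((k : ℕ)) k, v ((k : ℕ) + 1) k).2
        simp only [hv]
        rw [if_neg (lt_irrefl ((k : ℕ))), if_pos (Nat.lt_succ_self ((k : ℕ)))]
        have e : base + (k : ℕ) - 0 = base + ((k : ℕ) + 1) - 1 := by omega
        rw [e]
      · intro j hj
        have hne : (j : ℕ) ≠ (k : ℕ) := fun h => hj (Fin.ext h)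
        show (v ((k : ℕ)) j, v ((k : ℕ) + 1) j) ∈ R
        rcases Nat.lt_or_ge (j : ℕ) (k : ℕ) with h | h
        · simp only [hv]
          rw [if_pos h, if_pos (by omega)]
          have h1 : base + (k : ℕ) - 1 < m := by
            have := k.isLt; omega
          have h2 := hw (base + (k : ℕ) - 1) h1
          have h3 : base + (k : ℕ) - 1 + 1 = base + ((k : ℕ) + 1) - 1 := by omega
          rwa [h3] at h2
        · have h' : (k : ℕ) < (j : ℕ) := by omega
          simp only [hv]
          rw [if_neg (by omega), if_neg (by omega)]
          have hkn : (k : ℕ) < n - 1 := by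
            have := j.isLt; omega
          have h1 : base + (k : ℕ) < m := by omega
          have h2 := hw (base + (k : ℕ)) h1
          have h3 : base + (k : ℕ) + 1 = base + ((k : ℕ) + 1) - if True then 0 else 0 := by
            simp; omega
          simpa [Nat.add_assoc] using h2
    obtain ⟨t, ht1, ht2, ht3⟩ := habs (Set.range cf) (Set.finite_range cf) hcond
    have hv0 : t (v 0) = w base := by
      have e : v 0 = fun _ : Fin n => w base := by
        funext i
        show w (base + 0 - if (i : ℕ) < 0 then 1 else 0) = w base
        rw [if_neg (Nat.not_lt_zero _)]
        congr 1
      rw [e, ht1]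
    have hvn : t (v n) = w m := by
      have e : v n = fun _ : Fin n => w m := by
        funext i
        show w (base + n - if (i : ℕ) < n then 1 else 0) = w m
        rw [if_pos i.isLt]
        congr 1
        omega
      rw [e, ht1]
    set w' : ℕ → A := fun j => if j < base then w j else t (v (min (j - base) n)) with hw'
    have hw'lt : ∀ j, j < base → w' j = w j := fun j h => if_pos h
    have hw'ge : ∀ j, base ≤ j → w' j = t (v (min (j - base) n)) :=
      fun j h => if_neg (by omega)
    refine ⟨w', ?_, ?_, ?_⟩
    · by_cases h : 0 < base
      · exact hw'lt 0 h
      · have hb : base = 0 := by omega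
        rw [hw'ge 0 (by omega)]
        have e : min (0 - base) n = 0 := by omega
        rw [e, hv0, hb]
    · rw [hw'ge (m + 1) (by omega)]
      have e : min (m + 1 - base) n = n := by omega
      rw [e, hvn]
    · intro i hi
      rcases Nat.lt_or_ge (i + 1) base with h1 | h1
      · rw [hw'lt i (by omega), hw'lt (i + 1) h1]
        exact hw i (by omega)
      rcases Nat.lt_or_ge i base with h2 | h2
      · have hb : i + 1 = base := by omega
        rw [hw'lt i h2, hw'ge (i + 1) h1]
        have e : min (i + 1 - base) n = 0 := by omega
        rw [e, hv0, ← hb]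
        exact hw i (by omega)
      · have hk : i - base < n := by omega
        rw [hw'ge i h2, hw'ge (i + 1) (by omega)]
        have e1 : min (i - base) n = i - base := by omega
        have e2 : min (i + 1 - base) n = (i - base) + 1 := by omega
        rw [e1, e2]
        exact ht3 (cf ⟨i - base, hk⟩) ⟨⟨i - base, hk⟩, rfl⟩
  constructor
  · intro m hm
    induction m, hm using Nat.le_induction with
    | base => exact ⟨a, rfl, fun i hi => hwa i (by omega)⟩
    | succ m hm ih =>
      obtain ⟨w, hw0, hwe⟩ := ih
      obtain ⟨w', h0, _, he⟩ := hstretch m hm w hwe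
      exact ⟨w', h0.trans hw0, he⟩
  · rintro ⟨c, p, hp, hcp, hce⟩
    refine ⟨p * n, ?_⟩
    set d : ℕ → A := fun i => c (i % p) with hd
    have hde : ∀ i : ℕ, (d i, d (i + 1)) ∈ R := by
      intro i
      have h1 : i % p < p := Nat.mod_lt _ (by omega)
      have key : (i + 1) % p = (i % p + 1) % p := by
        conv_lhs => rw [← Nat.mod_add_div i p]
        rw [Nat.add_right_comm, Nat.add_mul_mod_self_left]
      have e : d (i + 1) = c (i % p + 1) := by
        show c ((i + 1) % p) = c (i % p + 1)
        rw [key]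
        by_cases h : i % p + 1 < p
        · rw [Nat.mod_eq_of_lt h]
        · have hb : i % p + 1 = p := by omega
          rw [hb, Nat.mod_self, ← hcp]
      rw [e]
      exact hce (i % p) h1
    have hnpn : n ≤ p * n := Nat.le_mul_of_pos_left n (by omega)
    intro m hm
    induction m, hm using Nat.le_induction with
    | base =>
      refine ⟨d, ?_, fun i _ => hde i⟩
      show c ((p * n) % p) = c (0 % p)
      rw [Nat.mul_mod_right, Nat.zero_mod]
    | succ m hm ih =>
      obtain ⟨w, hw0, hwe⟩ := ih
      obtain ⟨w', h0, hend, he⟩ := hstretch m (by omega) w (fun i hi => hwe i hi)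
      exact ⟨w', hend.trans (hw0.trans h0.symm), he⟩
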